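/- If an n-vertex graph G has a t-track layout, then for every real t' > 0, G has a ⌊t + t'⌋-track layout in which every track contains at most ⌈n/t'⌉ vertices. The same holds for improper track layouts. -/

import Mathlib

open SimpleGraph

/-- A (proper) track layout of the graph `G` with `t` tracks.
`track v` is the track (colour class) of vertex `v`, and `pos v` gives the
position of `v` in the total order of its track. -/
structure TrackLayout (V : Type) (G : SimpleGraph V) (t : ℕ) where
  /-- the track containing each vertex -/
  track : V → Fin t
  /-- the position of each vertex within its track -/
  pos : V → ℕ
  /-- distinct vertices on a common track occupy distinct positions -/
  inj : ∀ v w : V, track v = track w → pos v = pos w → v = w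
  /-- the tracks form a proper vertex colouring -/
  proper : ∀ v w : V, G.Adj v w → track v ≠ track w
  /-- no X-crossing: there are no edges `vw` and `xy` with `v, x` on one track,
  `w, y` on another track, `v <ᵢ x` and `y <ⱼ w` -/
  noX : ∀ v w x y : V, G.Adj v w → G.Adj x y →
    track v = track x → track w = track y → track v ≠ track w →
    pos v < pos x → pos y < pos w → False
/-- An improper track layout of `G` with `t` tracks: adjacent vertices may share a
track, but then they must be consecutive in that track; and there is no X-crossing. -/
structure ImproperTrackLayout (V : Type) (G : SimpleGraph V) (t : ℕ) where
  /-- the track containing each vertex -/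
  track : V → Fin t
  /-- the position of each vertex within its track -/
  pos : V → ℕ
  /-- distinct vertices on a common track occupy distinct positions -/
  inj : ∀ v w : V, track v = track w → pos v = pos w → v = w
  /-- adjacent vertices on a common track are consecutive in that track -/
  consecutive : ∀ v w x : V, G.Adj v w → track v = track w → track x = track v →
    pos v < pos x → pos x < pos w → False
  /-- no X-crossing -/
  noX : ∀ v w x y : V, G.Adj v w → G.Adj x y →
    track v = track x → track w = track y → track v ≠ track w →
    pos v < pos x → pos y < pos w → False

open Finset

private lemma sum_div_le' (m : ℕ) (s : Finset ℕ) (f : ℕ → ℕ) :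
    ∑ k ∈ s, f k / m ≤ (∑ k ∈ s, f k) / m := by
  rcases Nat.eq_zero_or_pos m with h | h
  · simp [h]
  rw [Nat.le_div_iff_mul_le h, Finset.sum_mul]
  exact Finset.sum_le_sum fun i _ => Nat.div_mul_le_self _ _

private lemma mod_lt_imp (m : ℕ) {a c : ℕ} (hq : a / m = c / m) (hr : a % m < c % m) :
    a < c := by
  have ha := Nat.div_add_mod a m
  have hc := Nat.div_add_mod c m
  rw [hq] at ha
  generalize m * (c / m) = k at ha hc
  generalize a % m = ra at ha hr
  generalize c % m = rc at hc hr
  omega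

private lemma succ_div_cases (m a : ℕ) :
    ((a + 1) / m = a / m ∧ ¬ m ∣ a + 1) ∨ ((a + 1) / m = a / m + 1 ∧ m ∣ a + 1) := by
  by_cases hd : m ∣ a + 1
  · exact Or.inr ⟨by rw [Nat.succ_div, if_pos hd], hd⟩
  · exact Or.inl ⟨by rw [Nat.succ_div, if_neg hd]; simp, hd⟩

private lemma cross_arith {m a b c d : ℕ}
    (hac : a / m = c / m) (hbd : b / m = d / m) (hne : a / m ≠ b / m)
    (h1 : a < c) (hab : b = a + 1 ∨ a = b + 1) (hcd : d = c + 1 ∨ c = d + 1) : False := by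
  rcases hab with hab | hab
  · subst hab
    rcases succ_div_cases m a with ⟨he, _⟩ | ⟨he, hdvd⟩
    · exact hne he.symm
    rcases hcd with hcd | hcd
    · subst hcd
      rcases succ_div_cases m c with ⟨he2, _⟩ | ⟨he2, hdvd2⟩
      · rw [he2, ← hac, he] at hbd; omega
      have h3 := Nat.div_mul_cancel hdvd
      have h4 := Nat.div_mul_cancel hdvd2
      rw [he, hac] at h3
      rw [he2] at h4
      omega
    · have hle : d / m ≤ c / m := Nat.div_le_div_right (by omega)
      rw [← hbd, he, ← hac] at hle
      omega
  · rcases succ_div_cases m b with ⟨he, _⟩ | ⟨he, hdvd⟩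
    · rw [hab] at hne; exact hne he
    rw [← hab] at he
    rcases hcd with hcd | hcd
    · have hle : c / m ≤ d / m := Nat.div_le_div_right (by omega)
      rw [← hac, ← hbd, he] at hle
      omega
    · rcases succ_div_cases m d with ⟨he2, _⟩ | ⟨he2, hdvd2⟩
      · rw [← hcd] at he2; omega
      rw [← hcd] at he2
      have h3 := Nat.div_mul_cancel (hab ▸ hdvd : m ∣ a)
      have h4 := Nat.div_mul_cancel (hcd ▸ hdvd2 : m ∣ c)
      rw [hac] at h3
      omega

private lemma track_core {V : Type} [Fintype V] [Nonempty V] {t : ℕ}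
    (track : V → Fin t) (pos : V → ℕ)
    (inj : ∀ v w : V, track v = track w → pos v = pos w → v = w)
    (m : ℕ) (hm : 0 < m) :
    ∃ T P R : V → ℕ,
      (∀ v, T v < t + Fintype.card V / m) ∧
      (∀ v, P v = R v % m) ∧
      (∀ v, P v < m) ∧
      (∀ v w, track v = track w → (R v < R w ↔ pos v < pos w)) ∧
      (∀ v w, T v = T w ↔ track v = track w ∧ R v / m = R w / m) ∧
      (∀ v w, track v = track w → pos v < pos w →
        (∀ x, track x = track v → pos v < pos x → pos x < pos w → False) →
        R w = R v + 1) := by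
  classical
  set R : V → ℕ := fun v => (univ.filter fun u => track u = track v ∧ pos u < pos v).card
    with hR
  set cnt : ℕ → ℕ := fun j => (univ.filter fun v => (track v : ℕ) = j).card with hcnt
  set off : ℕ → ℕ := fun j => j + ∑ k ∈ range j, cnt k / m with hoff
  have hmono : ∀ v w, track v = track w → pos v < pos w → R v < R w := by
    intro v w htr hp
    apply Finset.card_lt_card
    refine (Finset.ssubset_iff_of_subset ?_).mpr ⟨v, by simp [htr, hp], by simp⟩
    intro u hu
    simp only [mem_filter, mem_univ, true_and] at hu ⊢
    exact ⟨hu.1.trans htr, hu.2.trans hp⟩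
  have hiff : ∀ v w, track v = track w → (R v < R w ↔ pos v < pos w) := by
    intro v w htr
    constructor
    · intro h
      rcases lt_trichotomy (pos v) (pos w) with h' | h' | h'
      · exact h'
      · cases inj v w htr h'; exact absurd h (lt_irrefl _)
      · exact absurd h (not_lt.mpr (hmono w v htr.symm h').le)
    · exact hmono v w htr
  have hRlt : ∀ v, R v < cnt (track v) := by
    intro v
    apply Finset.card_lt_card
    refine (Finset.ssubset_iff_of_subset ?_).mpr ⟨v, by simp, by simp⟩
    intro u hu
    simp only [mem_filter, mem_univ, true_and] at hu ⊢
    exact congrArg Fin.val hu.1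
  have hsum : ∑ k ∈ range t, cnt k = Fintype.card V := by
    rw [← Finset.card_univ,
      Finset.card_eq_sum_card_fiberwise
        (f := fun v => (track v : ℕ)) (t := range t)
        (fun v _ => Finset.mem_range.mpr (track v).is_lt)]
  have hoffsucc : ∀ j : ℕ, off (j + 1) = off j + cnt j / m + 1 := by
    intro j
    simp only [hoff, Finset.sum_range_succ]
    ring
  have hoffmono : ∀ a b : ℕ, a ≤ b → off a ≤ off b := by
    intro a b hab
    simp only [hoff]
    exact Nat.add_le_add hab
      (Finset.sum_le_sum_of_subset (Finset.range_subset_range.mpr hab))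
  have hofft : off t ≤ t + Fintype.card V / m := by
    simp only [hoff]
    exact Nat.add_le_add_left ((sum_div_le' m _ _).trans (by rw [hsum])) t
  have hTlt : ∀ v, off (track v) + R v / m < t + Fintype.card V / m := by
    intro v
    have h1 : R v / m ≤ cnt (track v) / m := Nat.div_le_div_right (hRlt v).le
    calc off (track v) + R v / m ≤ off (track v) + cnt (track v) / m :=
          Nat.add_le_add_left h1 _
      _ < off ((track v : ℕ) + 1) := by rw [hoffsucc]; omega
      _ ≤ off t := hoffmono _ _ (track v).is_lt
      _ ≤ t + Fintype.card V / m := hofft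
  have hsep : ∀ v w : V, (track v : ℕ) < (track w : ℕ) →
      off (track v) + R v / m < off (track w) + R w / m := by
    intro v w h
    have h1 : R v / m ≤ cnt (track v) / m := Nat.div_le_div_right (hRlt v).le
    calc off (track v) + R v / m ≤ off (track v) + cnt (track v) / m :=
          Nat.add_le_add_left h1 _
      _ < off ((track v : ℕ) + 1) := by rw [hoffsucc]; omega
      _ ≤ off (track w) := hoffmono _ _ h
      _ ≤ off (track w) + R w / m := Nat.le_add_right _ _
  refine ⟨fun v => off (track v) + R v / m, fun v => R v % m, R, hTlt, fun v => rfl,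
    fun v => Nat.mod_lt _ hm, hiff, ?_, ?_⟩
  · intro v w
    constructor
    · intro h
      have htr : track v = track w := by
        rcases lt_trichotomy ((track v : ℕ)) ((track w : ℕ)) with h' | h' | h'
        · exact absurd h (Nat.ne_of_lt (hsep v w h'))
        · exact Fin.val_injective h'
        · exact absurd h.symm (Nat.ne_of_lt (hsep w v h'))
      refine ⟨htr, ?_⟩
      have h' : off (track v) + R v / m = off (track w) + R w / m := h
      rw [htr] at h'
      exact Nat.add_left_cancel h'
    · rintro ⟨htr, hq⟩
      show off (track v) + R v / m = off (track w) + R w / m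
      rw [htr, hq]
  · intro v w htr hp hbet
    have hins : (univ.filter fun u => track u = track w ∧ pos u < pos w)
        = insert v (univ.filter fun u => track u = track v ∧ pos u < pos v) := by
      ext u
      simp only [mem_insert, mem_filter, mem_univ, true_and]
      constructor
      · rintro ⟨h1, h2⟩
        rcases lt_trichotomy (pos u) (pos v) with h' | h' | h'
        · exact Or.inr ⟨h1.trans htr.symm, h'⟩
        · exact Or.inl (inj u v (h1.trans htr.symm) h')
        · exact (hbet u (h1.trans htr.symm) h' h2).elim
      · rintro (rfl | ⟨h1, h2⟩)
        · exact ⟨htr, hp⟩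
        · exact ⟨h1.trans htr, h2.trans hp⟩
    simp only [hR]
    rw [hins, Finset.card_insert_of_notMem (by simp)]

/-- **balancing.** If an `n`-vertex graph `G` has a `t`-track layout,
then for every real `t' > 0`, `G` has a `⌊t + t'⌋`-track layout in which every track
contains at most `⌈n / t'⌉` vertices. The same holds for improper track layouts. -/
theorem balancing_track_layout {V : Type} [Fintype V] (G : SimpleGraph V)
    (t : ℕ) (t' : ℝ) (ht' : 0 < t') :
    (∀ _L : TrackLayout V G t,
      ∃ L' : TrackLayout V G ⌊(t : ℝ) + t'⌋₊,
        ∀ i, {v : V | L'.track v = i}.ncard ≤ ⌈(Fintype.card V : ℝ) / t'⌉₊) ∧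
    (∀ _L : ImproperTrackLayout V G t,
      ∃ L' : ImproperTrackLayout V G ⌊(t : ℝ) + t'⌋₊,
        ∀ i, {v : V | L'.track v = i}.ncard ≤ ⌈(Fintype.card V : ℝ) / t'⌉₊) := by
  classical
  -- common numeric facts (for nonempty V)
  by_cases hV : IsEmpty V
  · constructor
    · intro _L
      refine ⟨⟨fun v => isEmptyElim v, fun _ => 0, fun v => isEmptyElim v,
        fun v => isEmptyElim v, fun v => isEmptyElim v⟩, ?_⟩
      intro i
      have h0 : ∀ s : Set V, s.ncard = 0 := fun s => by
        rw [Set.eq_empty_of_isEmpty s, Set.ncard_empty]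
      rw [h0]
      exact Nat.zero_le _
    · intro _L
      refine ⟨⟨fun v => isEmptyElim v, fun _ => 0, fun v => isEmptyElim v,
        fun v => isEmptyElim v, fun v => isEmptyElim v⟩, ?_⟩
      intro i
      have h0 : ∀ s : Set V, s.ncard = 0 := fun s => by
        rw [Set.eq_empty_of_isEmpty s, Set.ncard_empty]
      rw [h0]
      exact Nat.zero_le _
  haveI : Nonempty V := not_isEmpty_iff.mp hV
  set n := Fintype.card V with hn
  have hn0 : 0 < n := Fintype.card_pos
  set m := ⌈(n : ℝ) / t'⌉₊ with hmdef
  have hm : 0 < m := Nat.ceil_pos.mpr (div_pos (by exact_mod_cast hn0) ht')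
  have hub : t + n / m ≤ ⌊(t : ℝ) + t'⌋₊ := by
    have h1 : (↑(n / m) : ℝ) ≤ (n : ℝ) / (m : ℝ) := Nat.cast_div_le
    have h3 : (n : ℝ) / t' ≤ (m : ℝ) := Nat.le_ceil _
    have h2 : (n : ℝ) / m ≤ t' := by
      rw [div_le_iff₀ (by exact_mod_cast hm)]
      calc (n : ℝ) = ((n : ℝ) / t') * t' := (div_mul_cancel₀ _ (ne_of_gt ht')).symm
        _ ≤ (m : ℝ) * t' := mul_le_mul_of_nonneg_right h3 ht'.le
        _ = t' * (m : ℝ) := mul_comm _ _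
    have h4 : n / m ≤ ⌊t'⌋₊ := Nat.le_floor (h1.trans h2)
    have h5 : ⌊(t : ℝ) + t'⌋₊ = t + ⌊t'⌋₊ := by
      rw [add_comm ((t : ℕ) : ℝ) t', Nat.floor_add_natCast ht'.le, add_comm]
    omega
  constructor
  · -- proper case
    intro L
    obtain ⟨T, P, R, hTlt, hPdef, hPlt, hRiff, hTiff, hRcons⟩ :=
      track_core L.track L.pos L.inj m hm
    have hTV : ∀ v, T v < ⌊(t : ℝ) + t'⌋₊ := fun v => lt_of_lt_of_le (hTlt v) hub
    set Ftrack : V → Fin ⌊(t : ℝ) + t'⌋₊ := fun v => ⟨T v, hTV v⟩ with hFt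
    have hinj : ∀ v w, Ftrack v = Ftrack w → P v = P w → v = w := by
      intro v w h hp
      obtain ⟨htr, hq⟩ := (hTiff v w).mp (congrArg Fin.val h)
      have hr : R v = R w := by
        have h1 := Nat.div_add_mod (R v) m
        have h2 := Nat.div_add_mod (R w) m
        rw [hPdef v, hPdef w] at hp
        rw [hq] at h1
        generalize m * (R w / m) = k at h1 h2
        omega
      have hpv : L.pos v = L.pos w := by
        by_contra hne
        rcases Nat.lt_or_ge (L.pos v) (L.pos w) with h' | h'
        · have := (hRiff v w htr).mpr h'; omega
        · have := (hRiff w v htr.symm).mpr (lt_of_le_of_ne h' (Ne.symm hne)); omega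
      exact L.inj v w htr hpv
    refine ⟨⟨Ftrack, P, hinj, ?_, ?_⟩, ?_⟩
    · intro v w hadj h
      exact L.proper v w hadj ((hTiff v w).mp (congrArg Fin.val h)).1
    · intro v w x y hvw hxy h1 h2 h3 h4 h5
      obtain ⟨htvx, hqvx⟩ := (hTiff v x).mp (congrArg Fin.val h1)
      obtain ⟨htwy, hqwy⟩ := (hTiff w y).mp (congrArg Fin.val h2)
      have htvw : L.track v ≠ L.track w := L.proper v w hvw
      have hRvx : R v < R x :=
        mod_lt_imp m hqvx (by rw [← hPdef v, ← hPdef x]; exact h4)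
      have hRyw : R y < R w :=
        mod_lt_imp m hqwy.symm (by rw [← hPdef y, ← hPdef w]; exact h5)
      exact L.noX v w x y hvw hxy htvx htwy htvw
        ((hRiff v x htvx).mp hRvx) ((hRiff y w htwy.symm).mp hRyw)
    · intro i
      have hset : {v : V | Ftrack v = i} = ↑(univ.filter fun v => Ftrack v = i) := by
        ext v; simp
      rw [hset, Set.ncard_coe_finset]
      calc (univ.filter fun v => Ftrack v = i).card
          ≤ (range m).card := by
            apply Finset.card_le_card_of_injOn P
            · intro v _
              exact mem_range.mpr (hPlt v)
            · intro v hv w hw h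
              simp only [coe_filter, Set.mem_setOf_eq, mem_univ, true_and] at hv hw
              exact hinj v w (hv.trans hw.symm) h
        _ = m := card_range m
  · -- improper case
    intro L
    obtain ⟨T, P, R, hTlt, hPdef, hPlt, hRiff, hTiff, hRcons⟩ :=
      track_core L.track L.pos L.inj m hm
    have hTV : ∀ v, T v < ⌊(t : ℝ) + t'⌋₊ := fun v => lt_of_lt_of_le (hTlt v) hub
    set Ftrack : V → Fin ⌊(t : ℝ) + t'⌋₊ := fun v => ⟨T v, hTV v⟩ with hFt
    have hinj : ∀ v w, Ftrack v = Ftrack w → P v = P w → v = w := by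
      intro v w h hp
      obtain ⟨htr, hq⟩ := (hTiff v w).mp (congrArg Fin.val h)
      have hr : R v = R w := by
        have h1 := Nat.div_add_mod (R v) m
        have h2 := Nat.div_add_mod (R w) m
        rw [hPdef v, hPdef w] at hp
        rw [hq] at h1
        generalize m * (R w / m) = k at h1 h2
        omega
      have hpv : L.pos v = L.pos w := by
        by_contra hne
        rcases Nat.lt_or_ge (L.pos v) (L.pos w) with h' | h'
        · have := (hRiff v w htr).mpr h'; omega
        · have := (hRiff w v htr.symm).mpr (lt_of_le_of_ne h' (Ne.symm hne)); omega
      exact L.inj v w htr hpv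
    refine ⟨⟨Ftrack, P, hinj, ?_, ?_⟩, ?_⟩
    · -- consecutive
      intro v w x hadj h1 h2 hp1 hp2
      obtain ⟨htvw, hqvw⟩ := (hTiff v w).mp (congrArg Fin.val h1)
      obtain ⟨htxv, hqxv⟩ := (hTiff x v).mp (congrArg Fin.val h2)
      have hRvx : R v < R x :=
        mod_lt_imp m hqxv.symm (by rw [← hPdef v, ← hPdef x]; exact hp1)
      have hRxw : R x < R w :=
        mod_lt_imp m (hqxv.trans hqvw) (by rw [← hPdef x, ← hPdef w]; exact hp2)
      exact L.consecutive v w x hadj htvw htxv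
        ((hRiff v x htxv.symm).mp hRvx) ((hRiff x w (htxv.trans htvw)).mp hRxw)
    · -- noX
      intro v w x y hvw hxy h1 h2 h3 h4 h5
      obtain ⟨htvx, hqvx⟩ := (hTiff v x).mp (congrArg Fin.val h1)
      obtain ⟨htwy, hqwy⟩ := (hTiff w y).mp (congrArg Fin.val h2)
      have hRvx : R v < R x :=
        mod_lt_imp m hqvx (by rw [← hPdef v, ← hPdef x]; exact h4)
      have hRyw : R y < R w :=
        mod_lt_imp m hqwy.symm (by rw [← hPdef y, ← hPdef w]; exact h5)
      by_cases htvw : L.track v = L.track w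
      · -- all four vertices lie on a common old track
        have hqne : R v / m ≠ R w / m := by
          intro h
          exact h3 (Fin.val_injective ((hTiff v w).mpr ⟨htvw, h⟩))
        have hab : R w = R v + 1 ∨ R v = R w + 1 := by
          rcases lt_trichotomy (L.pos v) (L.pos w) with h' | h' | h'
          · exact Or.inl (hRcons v w htvw h'
              (fun z hz ha hb => L.consecutive v w z hvw htvw hz ha hb))
          · exact absurd (L.inj v w htvw h') (G.ne_of_adj hvw)
          · exact Or.inr (hRcons w v htvw.symm h'
              (fun z hz ha hb => L.consecutive w v z hvw.symm htvw.symm hz ha hb))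
        have htxy : L.track x = L.track y := by
          rw [← htvx, ← htwy]; exact htvw
        have hcd : R y = R x + 1 ∨ R x = R y + 1 := by
          rcases lt_trichotomy (L.pos x) (L.pos y) with h' | h' | h'
          · exact Or.inl (hRcons x y htxy h'
              (fun z hz ha hb => L.consecutive x y z hxy htxy hz ha hb))
          · exact absurd (L.inj x y htxy h') (G.ne_of_adj hxy)
          · exact Or.inr (hRcons y x htxy.symm h'
              (fun z hz ha hb => L.consecutive y x z hxy.symm htxy.symm hz ha hb))
        exact cross_arith hqvx hqwy hqne hRvx hab hcd
      · exact L.noX v w x y hvw hxy htvx htwy htvw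
          ((hRiff v x htvx).mp hRvx) ((hRiff y w htwy.symm).mp hRyw)
    · intro i
      have hset : {v : V | Ftrack v = i} = ↑(univ.filter fun v => Ftrack v = i) := by
        ext v; simp
      rw [hset, Set.ncard_coe_finset]
      calc (univ.filter fun v => Ftrack v = i).card
          ≤ (range m).card := by
            apply Finset.card_le_card_of_injOn P
            · intro v _
              exact mem_range.mpr (hPlt v)
            · intro v hv w hw h
              simp only [coe_filter, Set.mem_setOf_eq, mem_univ, true_and] at hv hw
              exact hinj v w (hv.trans hw.symm) h
        _ = m := card_range m
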